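/- (Proposition 2) For the PIE iterates x, assume additionally K > 0 where K := (1/√α₀ − 1)·C₁ + λ·C₂. Then for every δ > 0 and every natural number n ≥ 1 with (n : ℝ) > (2 / log α₀) · (log δ − log K), one has ‖x n − x (n−1)‖ < δ. -/
import Mathlib


open Finset in
/-- Proposition 2: small per-step change of the PIE iterates beyond the threshold. -/
theorem pie_prop2 {V : Type*} [NormedAddCommGroup V] [NormedSpace ℝ V]
    (α₀ lam : ℝ) (hα₀ : 0 < α₀) (hα₀' : α₀ < 1) (hlam : 0 ≤ lam)
    (x₀ : V) (e : ℕ → V) (x : ℕ → V)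
    (hx : ∀ N : ℕ, x N = (Real.sqrt α₀) ^ N • x₀
        + lam • ∑ i ∈ Finset.Icc 1 N, (Real.sqrt α₀) ^ i • e i)
    (C₁ C₂ : ℝ) (hC₁ : 0 ≤ C₁) (hC₂ : 0 ≤ C₂)
    (hx₀ : ‖x₀‖ ≤ C₁) (he : ∀ n : ℕ, 1 ≤ n → ‖e n‖ ≤ C₂)
    (K : ℝ) (hK : K = (1 / Real.sqrt α₀ - 1) * C₁ + lam * C₂) (hKpos : 0 < K) :
    ∀ δ : ℝ, 0 < δ → ∀ n : ℕ, 1 ≤ n →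
      (n : ℝ) > 2 / Real.log α₀ * (Real.log δ - Real.log K) →
      ‖x n - x (n - 1)‖ < δ := by
  intro δ hδ n hn hng
  set s := Real.sqrt α₀ with hs_def
  have hs0 : 0 < s := Real.sqrt_pos.mpr hα₀
  have hs1 : s < 1 := by
    rw [hs_def, show (1:ℝ) = Real.sqrt 1 by simp]
    exact Real.sqrt_lt_sqrt hα₀.le hα₀'
  obtain ⟨m, rfl⟩ : ∃ m, n = m + 1 := ⟨n - 1, (Nat.succ_pred_eq_of_pos hn).symm⟩
  have hd : x (m + 1) - x (m + 1 - 1)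
      = (s ^ (m+1) - s ^ m) • x₀ + (lam * s ^ (m+1)) • e (m+1) := by
    simp only [Nat.add_sub_cancel, hx]
    rw [Finset.sum_Icc_succ_top (by omega : 1 ≤ m + 1)]
    rw [sub_smul, smul_add, mul_smul]
    abel
  rw [hd]
  have h1 : ‖(s ^ (m+1) - s ^ m) • x₀ + (lam * s ^ (m+1)) • e (m+1)‖
      ≤ s ^ (m+1) * K := by
    calc ‖(s ^ (m+1) - s ^ m) • x₀ + (lam * s ^ (m+1)) • e (m+1)‖
        ≤ ‖(s ^ (m+1) - s ^ m) • x₀‖ + ‖(lam * s ^ (m+1)) • e (m+1)‖ := norm_add_le _ _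
      _ = |s ^ (m+1) - s ^ m| * ‖x₀‖ + |lam * s ^ (m+1)| * ‖e (m+1)‖ := by
          rw [norm_smul, norm_smul, Real.norm_eq_abs, Real.norm_eq_abs]
      _ ≤ (s ^ m - s ^ (m+1)) * C₁ + (lam * s ^ (m+1)) * C₂ := by
          have ha : |s ^ (m+1) - s ^ m| = s ^ m - s ^ (m+1) := by
            rw [abs_sub_comm]
            exact abs_of_nonneg (by rw [pow_succ]; nlinarith [pow_pos hs0 m])
          have hb : |lam * s ^ (m+1)| = lam * s ^ (m+1) := abs_of_nonneg (by positivity)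
          rw [ha, hb]
          gcongr
          · rw [pow_succ]; nlinarith [pow_pos hs0 m]
          · exact he (m+1) (by omega)
      _ = s ^ (m+1) * K := by
          rw [hK]
          have : s ^ m - s ^ (m+1) = s ^ (m+1) * (1 / s - 1) := by
            field_simp
            ring
          rw [this]; ring
  have h2 : s ^ (m+1) * K < δ := by
    have hlogα : Real.log α₀ < 0 := Real.log_neg hα₀ hα₀'
    have hc : ((m+1 : ℕ) : ℝ) * Real.log α₀ < 2 * (Real.log δ - Real.log K) := by
      rw [gt_iff_lt, div_mul_eq_mul_div, div_lt_iff_of_neg hlogα] at hng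
      linarith
    have hlogs : Real.log s = Real.log α₀ / 2 := Real.log_sqrt hα₀.le
    have : s ^ (m+1) < δ / K := by
      have := Real.exp_lt_exp.mpr (show ((m+1:ℕ):ℝ) * Real.log s < Real.log δ - Real.log K by
        rw [hlogs]; linarith)
      rw [← Real.log_pow] at this
      rw [Real.exp_log (pow_pos hs0 _)] at this
      rwa [Real.exp_sub, Real.exp_log hδ, Real.exp_log hKpos] at this
    calc s ^ (m+1) * K < (δ / K) * K := by gcongr
      _ = δ := by field_simp
  exact lt_of_le_of_lt h1 h2
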